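/- Fix integers $M \ge 1$ and $p_M \ge 1$. Write $p_M = a(M+1) + \bar{b}$ with $a = \lfloor (p_M - 1)/(M+1) \rfloor$ and set $b = \min\{M, \bar{b}\}$, $k^* = aM + b$. Then $\sum_{i=1}^{p_M} \big(i - p_M + \lfloor (i-1)/(M+1) \rfloor\big) = \sum_{i=1}^{k^*} \big(i - p_M + \lfloor (i-1)/M \rfloor\big) = \min_{0 \le k \le p_M} \sum_{i=1}^{k} \big(i - p_M + \lfloor (i-1)/M \rfloor\big)$. -/

import Mathlib

private lemma constBlock (D q r : ℕ) (hr : r ≤ D) :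
    ∑ j ∈ Finset.Ico (q * D) (q * D + r), j / D = r * q := by
  have h : ∀ j ∈ Finset.Ico (q * D) (q * D + r), j / D = q := by
    intro j hj
    rw [Finset.mem_Ico] at hj
    exact Nat.div_eq_of_lt_le hj.1 (lt_of_lt_of_le hj.2 (by rw [Nat.succ_mul]; omega))
  rw [Finset.sum_congr rfl h, Finset.sum_const, Nat.card_Ico, smul_eq_mul,
    Nat.add_sub_cancel_left]

private lemma blockSum0 (D q : ℕ) :
    2 * (∑ j ∈ Finset.range (q * D), j / D) + D * q = D * q * q := by
  induction q with
  | zero => simp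
  | succ q ih =>
    have hsplit : (∑ j ∈ Finset.Ico 0 (q * D), j / D)
        + ∑ j ∈ Finset.Ico (q * D) ((q + 1) * D), j / D
        = ∑ j ∈ Finset.Ico 0 ((q + 1) * D), j / D :=
      Finset.sum_Ico_consecutive _ (Nat.zero_le _) (by rw [Nat.succ_mul]; omega)
    have htail : ∑ j ∈ Finset.Ico (q * D) ((q + 1) * D), j / D = D * q := by
      have h2 : (q + 1) * D = q * D + D := by ring
      rw [h2, constBlock D q D le_rfl]
    simp only [← Finset.range_eq_Ico] at hsplit
    have h1 : (∑ j ∈ Finset.range ((q + 1) * D), j / D)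
        = (∑ j ∈ Finset.range (q * D), j / D) + D * q := by
      rw [← hsplit, htail]
    rw [h1]
    have h3 : D * (q + 1) * (q + 1) = D * q * q + 2 * (D * q) + D := by ring
    linarith

private lemma blockSum (D q r : ℕ) (hr : r ≤ D) :
    2 * (∑ j ∈ Finset.range (q * D + r), j / D) + D * q = D * q * q + 2 * (q * r) := by
  have hsplit : (∑ j ∈ Finset.Ico 0 (q * D), j / D)
      + ∑ j ∈ Finset.Ico (q * D) (q * D + r), j / D
      = ∑ j ∈ Finset.Ico 0 (q * D + r), j / D :=
    Finset.sum_Ico_consecutive _ (Nat.zero_le _) (Nat.le_add_right _ _)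
  simp only [← Finset.range_eq_Ico] at hsplit
  rw [← hsplit, constBlock D q r hr]
  have := blockSum0 D q
  have h4 : r * q = q * r := by ring
  linarith

private lemma sumT (D p n : ℕ) :
    2 * ∑ i ∈ Finset.Icc 1 n, ((i : ℤ) - (p : ℤ) + (((i - 1) / D : ℕ) : ℤ))
      = (n : ℤ) * (n + 1) - 2 * n * p + 2 * ∑ j ∈ Finset.range n, ((j / D : ℕ) : ℤ) := by
  induction n with
  | zero => simp
  | succ n ih =>
    rw [Finset.sum_Icc_succ_top (by omega : 1 ≤ n + 1), Finset.sum_range_succ]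
    have h : (n + 1 - 1) / D = n / D := by simp
    rw [h]
    push_cast
    push_cast at ih
    linarith

private lemma keyVal (D p n q r : ℕ) (hr : r ≤ D) (hn : n = q * D + r) :
    2 * ∑ i ∈ Finset.Icc 1 n, ((i : ℤ) - (p : ℤ) + (((i - 1) / D : ℕ) : ℤ))
      = (n : ℤ) * (n + 1) - 2 * n * p + D * q * q - D * q + 2 * (q * r) := by
  have hb := blockSum D q r hr
  rw [← hn] at hb
  have hbz : 2 * (((∑ j ∈ Finset.range n, j / D : ℕ)) : ℤ) + (D : ℤ) * q
      = (D : ℤ) * q * q + 2 * ((q : ℤ) * r) := by exact_mod_cast hb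
  have hc : ((∑ j ∈ Finset.range n, j / D : ℕ) : ℤ)
      = ∑ j ∈ Finset.range n, ((j / D : ℕ) : ℤ) := by push_cast; rfl
  rw [hc] at hbz
  have := sumT D p n
  linarith

/-- Floor-sum identity (Eq. (67)): with `a = ⌊(p-1)/(M+1)⌋`,
`p = a(M+1) + b̄`, `b = min M b̄`, `k* = aM + b`, the full sum with denominator `M+1`
equals the partial sum up to `k*` with denominator `M`, which is the minimal partial
sum over `0 ≤ k ≤ p`. -/
theorem floor_sum_identity (M p : ℕ) (hM : 1 ≤ M) (hp : 1 ≤ p)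
    (a : ℕ) (ha : a = (p - 1) / (M + 1))
    (bbar : ℕ) (hbbar : p = a * (M + 1) + bbar)
    (b : ℕ) (hb : b = min M bbar)
    (kstar : ℕ) (hkstar : kstar = a * M + b) :
    (∑ i ∈ Finset.Icc 1 p, ((i : ℤ) - (p : ℤ) + (((i - 1) / (M + 1) : ℕ) : ℤ)))
        = (∑ i ∈ Finset.Icc 1 kstar, ((i : ℤ) - (p : ℤ) + (((i - 1) / M : ℕ) : ℤ)))
    ∧ (∑ i ∈ Finset.Icc 1 kstar, ((i : ℤ) - (p : ℤ) + (((i - 1) / M : ℕ) : ℤ)))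
        = (Finset.Icc 0 p).inf' (Finset.nonempty_Icc.mpr (Nat.zero_le p))
            (fun k => ∑ i ∈ Finset.Icc 1 k,
              ((i : ℤ) - (p : ℤ) + (((i - 1) / M : ℕ) : ℤ))) := by
  have hM0 : 0 < M := hM
  have hdm : (M + 1) * ((p - 1) / (M + 1)) + (p - 1) % (M + 1) = p - 1 :=
    Nat.div_add_mod _ _
  rw [← ha] at hdm
  have hmlt : (p - 1) % (M + 1) < M + 1 := Nat.mod_lt _ (by omega)
  have hma : (M + 1) * a = a * (M + 1) := by ring
  rw [hma] at hdm
  have hp1 : p - 1 + 1 = p := by omega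
  have hle : a * (M + 1) ≤ p - 1 := Nat.le.intro hdm
  have hbb1 : 1 ≤ bbar := by linarith
  have hbb2 : bbar ≤ M + 1 := by linarith
  have hb1 : 1 ≤ b := by rw [hb]; exact le_min hM hbb1
  have hbM : b ≤ M := by rw [hb]; exact min_le_left _ _
  have hbbbar : b ≤ bbar := by rw [hb]; exact min_le_right _ _
  have hsplit_p : a * (M + 1) = a * M + a := by ring
  have hkp : kstar ≤ p := by rw [hkstar, hbbar, hsplit_p]; linarith
  have hdiv1 : (kstar - 1) / M = a := by
    rw [hkstar, Nat.add_sub_assoc hb1,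
      show a * M + (b - 1) = b - 1 + M * a from by ring,
      Nat.add_mul_div_left _ _ hM0, Nat.div_eq_of_lt (by omega : b - 1 < M), Nat.zero_add]
  have hdiv2 : kstar / M = a + b / M := by
    rw [hkstar, show a * M + b = b + M * a from by ring,
      Nat.add_mul_div_left _ _ hM0, Nat.add_comm]
  have hlow : kstar + (kstar - 1) / M ≤ p := by
    rw [hdiv1, hkstar, hbbar, hsplit_p]; linarith
  have hup : p ≤ kstar + 1 + kstar / M := by
    rw [hdiv2]
    rcases eq_or_lt_of_le hbM with hEq | hlt
    · have hbd : b / M = 1 := by rw [hEq, Nat.div_self hM0]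
      rw [hbd, hbbar, hkstar, hsplit_p]; linarith
    · have hbe : b = bbar := by
        rcases le_total M bbar with h | h
        · rw [hb, min_eq_left h] at hlt; omega
        · rw [hb, min_eq_right h]
      have hbd : b / M = 0 := Nat.div_eq_of_lt hlt
      rw [hbd, hbbar, hkstar, hsplit_p]; linarith
  have hmin : ∀ k, k ≤ p →
      (∑ i ∈ Finset.Icc 1 kstar, ((i : ℤ) - (p : ℤ) + (((i - 1) / M : ℕ) : ℤ)))
        ≤ ∑ i ∈ Finset.Icc 1 k, ((i : ℤ) - (p : ℤ) + (((i - 1) / M : ℕ) : ℤ)) := by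
    intro k hk
    have hIoc : ∀ n : ℕ, (∑ i ∈ Finset.Icc 1 n, ((i : ℤ) - (p : ℤ) + (((i - 1) / M : ℕ) : ℤ)))
        = ∑ i ∈ Finset.Ioc 0 n, ((i : ℤ) - (p : ℤ) + (((i - 1) / M : ℕ) : ℤ)) := by
      intro n; rw [← Finset.Icc_add_one_left_eq_Ioc, zero_add]
    rw [hIoc k, hIoc kstar]
    rcases le_total k kstar with hcase | hcase
    · have hsum := Finset.sum_Ioc_consecutive
        (fun i => ((i : ℤ) - (p : ℤ) + (((i - 1) / M : ℕ) : ℤ))) (Nat.zero_le k) hcase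
      have hterm : ∑ i ∈ Finset.Ioc k kstar,
          ((i : ℤ) - (p : ℤ) + (((i - 1) / M : ℕ) : ℤ)) ≤ 0 := by
        apply Finset.sum_nonpos
        intro i hi
        rw [Finset.mem_Ioc] at hi
        have hd : (i - 1) / M ≤ (kstar - 1) / M := Nat.div_le_div_right (by omega)
        have hnat : i + (i - 1) / M ≤ p := by linarith [hi.2]
        have hz : (i : ℤ) + (((i - 1) / M : ℕ) : ℤ) ≤ (p : ℤ) := by exact_mod_cast hnat
        linarith
      linarith [hsum]
    · have hsum := Finset.sum_Ioc_consecutive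
        (fun i => ((i : ℤ) - (p : ℤ) + (((i - 1) / M : ℕ) : ℤ))) (Nat.zero_le kstar) hcase
      have hterm : 0 ≤ ∑ i ∈ Finset.Ioc kstar k,
          ((i : ℤ) - (p : ℤ) + (((i - 1) / M : ℕ) : ℤ)) := by
        apply Finset.sum_nonneg
        intro i hi
        rw [Finset.mem_Ioc] at hi
        have hd : kstar / M ≤ (i - 1) / M := Nat.div_le_div_right (by omega)
        have hnat : p ≤ i + (i - 1) / M := by
          have h5 : kstar + 1 ≤ i := hi.1
          linarith
        have hz : (p : ℤ) ≤ (i : ℤ) + (((i - 1) / M : ℕ) : ℤ) := by exact_mod_cast hnat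
        linarith
      linarith [hsum]
  constructor
  · have k1 := keyVal (M + 1) p p a bbar hbb2 hbbar
    have k2 := keyVal M p kstar a b hbM hkstar
    have hpz : (p : ℤ) = a * (M + 1) + bbar := by exact_mod_cast hbbar
    have hkz : (kstar : ℤ) = a * M + b := by exact_mod_cast hkstar
    have hE : (p : ℤ) * (p + 1) - 2 * p * p + ((M : ℤ) + 1) * a * a - ((M : ℤ) + 1) * a
          + 2 * ((a : ℤ) * bbar)
        = (kstar : ℤ) * (kstar + 1) - 2 * kstar * p + (M : ℤ) * a * a - (M : ℤ) * a
          + 2 * ((a : ℤ) * b) := by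
      rcases le_or_gt bbar M with hc | hc
      · have hbe : b = bbar := by rw [hb, min_eq_right hc]
        have hbez : (b : ℤ) = bbar := by exact_mod_cast hbe
        rw [hpz, hkz, hbez]; ring
      · have hbe : b = M := by rw [hb, min_eq_left (by omega)]
        have hbbe : bbar = M + 1 := by omega
        have hbez : (b : ℤ) = M := by exact_mod_cast hbe
        have hbbez : (bbar : ℤ) = M + 1 := by exact_mod_cast hbbe
        rw [hpz, hkz, hbez, hbbez]; ring
    push_cast at k1 k2 hE ⊢
    linarith
  · apply le_antisymm
    · exact Finset.le_inf' _ _ (fun k hk => hmin k (Finset.mem_Icc.mp hk).2)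
    · exact Finset.inf'_le _ (Finset.mem_Icc.mpr ⟨Nat.zero_le _, hkp⟩)
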